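/- A partition λ = (λ₁, ..., λ_s) of n with s positive parts is a Garden of Eden partition for the Bulgarian solitaire (i.e., λ is not in the image of the operator B on partitions of n) if and only if λ₁ < s - 1. -/
import Mathlib


/-- A partition of `n`: a multiset of positive integers summing to `n`
(multisets model nonincreasing sequences, since order is irrelevant). -/
def IsPartition (n : ℕ) (l : Multiset ℕ) : Prop :=
  l.sum = n ∧ ∀ x ∈ l, 0 < x

/-- The Bulgarian solitaire move: remove one card from each pile, discard empty
piles, and add a new pile whose size is the number of old piles. -/
def bulg (l : Multiset ℕ) : Multiset ℕ :=
  (Multiset.card l ::ₘ l.map (· - 1)).filter (0 < ·)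

/-- The staircase partition `(k, k-1, …, 2, 1)`. -/
def staircase (k : ℕ) : Multiset ℕ := (Multiset.range k).map (· + 1)

lemma multiset_sup_mem (l : Multiset ℕ) (h : l ≠ 0) : l.sup ∈ l := by
  induction l using Multiset.induction with
  | empty => simp at h
  | cons a s ih =>
    rcases eq_or_ne s 0 with rfl | hs
    · simp
    · have hmem := ih hs
      rw [Multiset.sup_cons]
      rcases le_total a s.sup with hle | hle
      · rw [sup_eq_right.mpr hle]; exact Multiset.mem_cons_of_mem hmem
      · rw [sup_eq_left.mpr hle]; exact Multiset.mem_cons_self a s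

/-- A partition of n with s parts and largest part λ₁ is a Garden of Eden
partition (no preimage under the Bulgarian solitaire operator among partitions
of n) if and only if λ₁ < s - 1. -/
theorem gardenOfEden_iff (n : ℕ) (l : Multiset ℕ) (hl : IsPartition n l) :
    (¬ ∃ m : Multiset ℕ, IsPartition n m ∧ bulg m = l) ↔
      l.sup < Multiset.card l - 1 := by
  obtain ⟨hsum, hpos⟩ := hl
  constructor
  · -- no preimage → sup < card - 1; contrapositive: sup ≥ card - 1 → preimage exists
    intro hno
    by_contra hlt
    push_neg at hlt  -- card l - 1 ≤ l.sup
    apply hno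
    rcases eq_or_ne l 0 with rfl | hne
    · refine ⟨0, ⟨by simp [← hsum], by simp⟩, by decide⟩
    · set s := Multiset.card l with hs
      set a := l.sup with ha
      have hamem : a ∈ l := multiset_sup_mem l hne
      have hapos : 0 < a := hpos a hamem
      have hcons : a ::ₘ l.erase a = l := Multiset.cons_erase hamem
      have hcard_erase : Multiset.card (l.erase a) = s - 1 :=
        Multiset.card_erase_of_mem hamem
      have hspos : 0 < s := Multiset.card_pos.mpr hne
      have hsa : s - 1 ≤ a := hlt
      refine ⟨(l.erase a).map (· + 1) + Multiset.replicate (a - (s - 1)) 1, ⟨?_, ?_⟩, ?_⟩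
      · -- sum = n
        have h1 : ((l.erase a).map (· + 1)).sum = (l.erase a).sum + (s - 1) := by
          rw [Multiset.sum_map_add]
          simp [hcard_erase]
        have h2 : a + (l.erase a).sum = n := by
          rw [← hsum, ← hcons]; simp
        rw [Multiset.sum_add, h1, Multiset.sum_replicate, smul_eq_mul, mul_one]
        omega
      · -- positivity
        intro x hx
        rw [Multiset.mem_add] at hx
        rcases hx with hx | hx
        · obtain ⟨y, _, rfl⟩ := Multiset.mem_map.mp hx
          omega
        · rw [Multiset.eq_of_mem_replicate hx]; norm_num
      · -- bulg of it is l
        have hcardm : Multiset.card ((l.erase a).map (· + 1)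
            + Multiset.replicate (a - (s - 1)) 1) = a := by
          simp [hcard_erase]; omega
        rw [bulg, hcardm, Multiset.map_add, Multiset.map_map,
          Multiset.map_replicate]
        have hmap : (l.erase a).map ((· - 1) ∘ (· + 1)) = l.erase a := by
          rw [show ((· - 1) ∘ (· + 1) : ℕ → ℕ) = id from funext fun x => by simp]
          exact Multiset.map_id _
        rw [hmap]
        have : (1 : ℕ) - 1 = 0 := rfl
        rw [this]
        have hf1 : (l.erase a).filter (0 < ·) = l.erase a := by
          apply Multiset.filter_eq_self.mpr
          intro x hx
          exact hpos x (Multiset.mem_of_mem_erase hx)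
        have hf2 : (Multiset.replicate (a - (s - 1)) 0).filter (0 < ·) = 0 := by
          apply Multiset.filter_eq_nil.mpr
          intro x hx
          rw [Multiset.eq_of_mem_replicate hx]; simp
        rw [Multiset.filter_cons, Multiset.filter_add, hf1, hf2, add_zero]
        simp only [hapos, if_pos]
        rw [Multiset.singleton_add, hcons]
  · -- sup < card - 1 → no preimage
    rintro hlt ⟨m, ⟨hmsum, hmpos⟩, hbulg⟩
    have hcne : Multiset.card m ≠ 0 := by
      intro h
      rw [Multiset.card_eq_zero] at h
      subst h
      have hz : bulg 0 = 0 := by decide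
      rw [hz] at hbulg
      rw [← hbulg] at hlt
      simp at hlt
    have hcmem : Multiset.card m ∈ l := by
      rw [← hbulg, bulg, Multiset.mem_filter]
      exact ⟨Multiset.mem_cons_self _ _, Nat.pos_of_ne_zero hcne⟩
    have h1 : Multiset.card m ≤ l.sup := Multiset.le_sup hcmem
    have h2 : Multiset.card l ≤ Multiset.card m + 1 := by
      rw [← hbulg, bulg]
      calc Multiset.card ((Multiset.card m ::ₘ m.map (· - 1)).filter (0 < ·))
          ≤ Multiset.card (Multiset.card m ::ₘ m.map (· - 1)) :=
            Multiset.card_le_card (Multiset.filter_le _ _)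
        _ = Multiset.card m + 1 := by simp
    omega
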